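/- If D is a digraph with n ≥ 2 vertices and a arcs, then the trace norm of A_α(D) satisfies ‖D_α‖_* ≥ √((1-α)² a + α² Σ_{i=1}^n (d_i⁺)² + n(n-1)|det A_α|^{2/n}). -/

import Mathlib

open Matrix Real

/-- Adjacency matrix (over ℝ) of a digraph given by an arc relation on `Fin n`. -/
def adjMat {n : ℕ} (R : Fin n → Fin n → Prop) [DecidableRel R] :
    Matrix (Fin n) (Fin n) ℝ :=
  Matrix.of fun i j => if R i j then 1 else 0

/-- Outdegree of a vertex. -/
def outdeg {n : ℕ} (R : Fin n → Fin n → Prop) [DecidableRel R] (i : Fin n) : ℕ :=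
  (Finset.univ.filter fun j => R i j).card

/-- Indegree of a vertex. -/
def indeg {n : ℕ} (R : Fin n → Fin n → Prop) [DecidableRel R] (j : Fin n) : ℕ :=
  (Finset.univ.filter fun i => R i j).card

/-- The `A_α` matrix of a digraph: `α Δ⁺ + (1-α) A`. -/
noncomputable def Amat {n : ℕ} (α : ℝ) (R : Fin n → Fin n → Prop) [DecidableRel R] :
    Matrix (Fin n) (Fin n) ℝ :=
  α • Matrix.diagonal (fun i => (outdeg R i : ℝ)) + (1 - α) • adjMat R

/-- The singular values of a real square matrix `M`: the nonnegative square roots of the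
eigenvalues of `M Mᵀ` (`Mᴴ = Mᵀ` over ℝ). -/
noncomputable def singVals {m : Type*} [Fintype m] [DecidableEq m]
    (M : Matrix m m ℝ) (i : m) : ℝ :=
  Real.sqrt ((Matrix.isHermitian_mul_conjTranspose_self M).eigenvalues i)

/-- Trace norm: sum of the singular values. -/
noncomputable def traceNorm {m : Type*} [Fintype m] [DecidableEq m]
    (M : Matrix m m ℝ) : ℝ :=
  ∑ i, singVals M i

/-- Spectral norm: the largest singular value. -/
noncomputable def specNorm {m : Type*} [Fintype m] [DecidableEq m]
    (M : Matrix m m ℝ) : ℝ :=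
  ⨆ i, singVals M i

lemma sum_eig_trace' {m : Type*} [Fintype m] [DecidableEq m]
    {A : Matrix m m ℝ} (hA : A.IsHermitian) :
    ∑ i, hA.eigenvalues i = A.trace := by
  conv_rhs => rw [hA.spectral_theorem]
  rw [Unitary.conjStarAlgAut_apply, Matrix.trace_mul_cycle]
  have h1 : (star (hA.eigenvectorUnitary : Matrix m m ℝ)) *
      (hA.eigenvectorUnitary : Matrix m m ℝ) = 1 := by
    simpa using unitary.coe_star_mul_self hA.eigenvectorUnitary
  rw [h1, Matrix.one_mul, Matrix.trace_diagonal]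
  simp

lemma trace_frob' {m : Type*} [Fintype m] [DecidableEq m] (M : Matrix m m ℝ) :
    (M * Mᴴ).trace = ∑ i, ∑ j, (M i j) ^ 2 := by
  simp [Matrix.trace, Matrix.mul_apply, Matrix.conjTranspose_apply, Matrix.diag, sq]

lemma frob_Amat' {n : ℕ} (α : ℝ) (R : Fin n → Fin n → Prop) [DecidableRel R]
    (hirr : ∀ i, ¬ R i i) :
    ∑ i, ∑ j, (Amat α R i j) ^ 2 =
      (1 - α) ^ 2 * (∑ i, (outdeg R i : ℝ)) + α ^ 2 * ∑ i, ((outdeg R i : ℝ)) ^ 2 := by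
  have hpt : ∀ i j, (Amat α R i j) ^ 2 =
      (if i = j then α ^ 2 * ((outdeg R i : ℝ)) ^ 2 else 0) +
      (if R i j then (1 - α) ^ 2 else 0) := by
    intro i j
    by_cases h : i = j
    · subst h; simp [Amat, adjMat, Matrix.diagonal, hirr i]; ring
    · by_cases hr : R i j <;>
        simp [Amat, adjMat, Matrix.diagonal, h, hr]
  simp only [hpt, Finset.sum_add_distrib]
  have h1 : ∀ i : Fin n, ∑ j, (if i = j then α ^ 2 * ((outdeg R i : ℝ)) ^ 2 else 0)
      = α ^ 2 * ((outdeg R i : ℝ)) ^ 2 := by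
    intro i; simp
  have h2 : ∀ i : Fin n, ∑ j, (if R i j then ((1 - α) ^ 2 : ℝ) else 0)
      = (1 - α) ^ 2 * (outdeg R i : ℝ) := by
    intro i
    rw [← Finset.sum_filter, Finset.sum_const, nsmul_eq_mul]
    rw [outdeg]; ring
  simp only [h1, h2, ← Finset.sum_add_distrib]
  rw [Finset.mul_sum, Finset.mul_sum, ← Finset.sum_add_distrib]
  exact Finset.sum_congr rfl fun i _ => by ring

lemma prod_singVals' {m : Type*} [Fintype m] [DecidableEq m] (M : Matrix m m ℝ) :
    ∏ i, singVals M i = |M.det| := by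
  have h := Matrix.isHermitian_mul_conjTranspose_self M
  have hnn : ∀ i, 0 ≤ h.eigenvalues i := fun i =>
    Matrix.eigenvalues_self_mul_conjTranspose_nonneg M i
  have hsq : (∏ i, singVals M i) ^ 2 = ∏ i, h.eigenvalues i := by
    rw [← Finset.prod_pow]
    exact Finset.prod_congr rfl fun i _ => Real.sq_sqrt (hnn i)
  have hdet : ∏ i, h.eigenvalues i = M.det ^ 2 := by
    have h2 := h.det_eq_prod_eigenvalues
    rw [Matrix.det_mul, Matrix.det_conjTranspose, star_trivial, ← sq] at h2
    rw [h2]; norm_num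
  have hnn2 : 0 ≤ ∏ i, singVals M i :=
    Finset.prod_nonneg fun i _ => Real.sqrt_nonneg _
  calc ∏ i, singVals M i = Real.sqrt ((∏ i, singVals M i)^2) :=
        (Real.sqrt_sq hnn2).symm
    _ = Real.sqrt (M.det ^ 2) := by rw [hsq, hdet]
    _ = |M.det| := Real.sqrt_sq_eq_abs _

lemma prod_offDiag' {n : ℕ} (hn : 2 ≤ n) (σ : Fin n → ℝ) :
    ∏ p ∈ Finset.univ.offDiag, (σ p.1 * σ p.2) = (∏ i, σ i) ^ (2 * (n - 1)) := by
  by_cases hz : ∏ i, σ i = 0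
  · obtain ⟨k, -, hk⟩ := Finset.prod_eq_zero_iff.mp hz
    obtain ⟨j, hj⟩ := Fintype.exists_ne_of_one_lt_card (by rw [Fintype.card_fin]; omega) k
    rw [hz, zero_pow (by omega)]
    exact Finset.prod_eq_zero (i := (k, j))
      (Finset.mem_offDiag.mpr ⟨Finset.mem_univ _, Finset.mem_univ _, hj.symm⟩)
      (by show σ k * σ j = 0; rw [hk]; ring)
  · have hfull : ∏ p ∈ Finset.univ ×ˢ Finset.univ, (σ p.1 * σ p.2)
        = (∏ i, σ i) ^ (2 * n) := by
      rw [Finset.prod_product]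
      simp only [Finset.prod_mul_distrib, Finset.prod_const, Finset.prod_pow,
        Finset.card_univ, Fintype.card_fin]
      rw [← pow_add, two_mul]
    rw [← Finset.diag_union_offDiag,
      Finset.prod_union (Finset.disjoint_diag_offDiag _), Finset.prod_diag] at hfull
    have hdiag : ∏ i, (σ i * σ i) = (∏ i, σ i) ^ 2 := by
      rw [sq, ← Finset.prod_mul_distrib]
    rw [hdiag] at hfull
    have hpow : (∏ i, σ i) ^ (2 * n) = (∏ i, σ i) ^ 2 * (∏ i, σ i) ^ (2 * (n - 1)) := by
      rw [← pow_add]; congr 1; omega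
    rw [hpow] at hfull
    exact mul_left_cancel₀ (pow_ne_zero _ hz) hfull

lemma amgm_off' {n : ℕ} (hn : 2 ≤ n) (σ : Fin n → ℝ) (hσ : ∀ i, 0 ≤ σ i) :
    (n : ℝ) * ((n : ℝ) - 1) * (∏ i, σ i) ^ ((2 : ℝ) / n) ≤
      ∑ p ∈ (Finset.univ : Finset (Fin n)).offDiag, σ p.1 * σ p.2 := by
  have hprod := prod_offDiag' hn σ
  have hn1 : (1 : ℝ) ≤ (n : ℝ) - 1 := by
    have : (2:ℝ) ≤ n := by exact_mod_cast hn
    linarith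
  have hN : (0 : ℝ) < (n : ℝ) * ((n : ℝ) - 1) := by positivity
  set s : Finset (Fin n × Fin n) := Finset.univ.offDiag with hs
  have hcard : (s.card : ℝ) = (n : ℝ) * ((n : ℝ) - 1) := by
    rw [hs, Finset.offDiag_card, Finset.card_univ, Fintype.card_fin]
    have h1 : n ≤ n * n := Nat.le_mul_of_pos_left n (by omega)
    rw [Nat.cast_sub h1]
    push_cast; ring
  set c : ℝ := ((n : ℝ) * ((n : ℝ) - 1))⁻¹ with hc
  have hz : ∀ p ∈ s, (0:ℝ) ≤ σ p.1 * σ p.2 := fun p _ => mul_nonneg (hσ _) (hσ _)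
  have key := Real.geom_mean_le_arith_mean_weighted s (fun _ => c)
    (fun p => σ p.1 * σ p.2) (fun i _ => by positivity) (by
      rw [Finset.sum_const, nsmul_eq_mul, hcard, hc, mul_inv_cancel₀ hN.ne']) hz
  rw [Real.finset_prod_rpow s _ hz, hprod] at key
  have hPnn : (0:ℝ) ≤ ∏ i, σ i := Finset.prod_nonneg fun i _ => hσ i
  have hexp : ((∏ i, σ i) ^ (2 * (n - 1))) ^ c = (∏ i, σ i) ^ ((2 : ℝ) / n) := by
    rw [← Real.rpow_natCast (∏ i, σ i) (2 * (n-1)), ← Real.rpow_mul hPnn]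
    congr 1
    have h1 : ((2 * (n - 1) : ℕ) : ℝ) = 2 * ((n:ℝ) - 1) := by
      rw [Nat.cast_mul, Nat.cast_sub (by omega)]; push_cast; ring
    rw [h1, hc]
    field_simp
  rw [hexp] at key
  simp only [← Finset.mul_sum] at key
  calc (n : ℝ) * ((n : ℝ) - 1) * (∏ i, σ i) ^ ((2 : ℝ) / n)
      ≤ (n : ℝ) * ((n : ℝ) - 1) * (c * ∑ p ∈ s, σ p.1 * σ p.2) := by
        exact mul_le_mul_of_nonneg_left key hN.le
    _ = ∑ p ∈ s, σ p.1 * σ p.2 := by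
        rw [hc, ← mul_assoc, mul_inv_cancel₀ hN.ne', one_mul]

/-- Lower bound for the trace norm:
`‖D_α‖_* ≥ √((1-α)² a + α² Σ(d_i⁺)² + n(n-1)|det A_α|^{2/n})`. -/
theorem stmt_13 (n : ℕ) (hn : 2 ≤ n) (R : Fin n → Fin n → Prop) [DecidableRel R]
    (hirr : ∀ i, ¬ R i i) (α : ℝ) (hα0 : 0 ≤ α) (hα1 : α < 1)
    (a : ℕ) (ha : a = ∑ i, outdeg R i) :
    Real.sqrt ((1 - α) ^ 2 * a + α ^ 2 * ∑ i, ((outdeg R i : ℝ)) ^ 2 +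
        n * (n - 1) * |(Amat α R).det| ^ ((2 : ℝ) / n)) ≤
      traceNorm (Amat α R) := by
  set M := Amat α R with hM
  set σ : Fin n → ℝ := singVals M with hσdef
  have hσ : ∀ i, 0 ≤ σ i := fun i => Real.sqrt_nonneg _
  have hT : 0 ≤ traceNorm M := Finset.sum_nonneg fun i _ => hσ i
  -- sum of squares of singular values
  have hsumsq : ∑ i, σ i ^ 2 =
      (1 - α) ^ 2 * a + α ^ 2 * ∑ i, ((outdeg R i : ℝ)) ^ 2 := by
    have h := Matrix.isHermitian_mul_conjTranspose_self M
    have h1 : ∑ i, σ i ^ 2 = ∑ i, h.eigenvalues i := by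
      refine Finset.sum_congr rfl fun i _ => ?_
      exact Real.sq_sqrt (Matrix.eigenvalues_self_mul_conjTranspose_nonneg M i)
    rw [h1, sum_eig_trace' h, trace_frob' M, hM, frob_Amat' α R hirr, ha]
    rw [Nat.cast_sum]
  -- off-diagonal bound
  have hoff : (n : ℝ) * ((n : ℝ) - 1) * |M.det| ^ ((2 : ℝ) / n) ≤
      ∑ p ∈ (Finset.univ : Finset (Fin n)).offDiag, σ p.1 * σ p.2 := by
    have := amgm_off' hn σ hσ
    rwa [hσdef, prod_singVals' M] at this
  -- square of trace norm
  have hsq : traceNorm M ^ 2 = ∑ i, σ i ^ 2 +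
      ∑ p ∈ (Finset.univ : Finset (Fin n)).offDiag, σ p.1 * σ p.2 := by
    rw [traceNorm, sq, Finset.sum_mul_sum]
    rw [← Finset.sum_product']
    rw [← Finset.diag_union_offDiag,
      Finset.sum_union (Finset.disjoint_diag_offDiag _), Finset.sum_diag]
    congr 1
    exact Finset.sum_congr rfl fun i _ => by rw [sq]
  calc Real.sqrt ((1 - α) ^ 2 * a + α ^ 2 * ∑ i, ((outdeg R i : ℝ)) ^ 2 +
        n * (n - 1) * |M.det| ^ ((2 : ℝ) / n))
      ≤ Real.sqrt (traceNorm M ^ 2) := by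
        apply Real.sqrt_le_sqrt
        rw [hsq, ← hsumsq]
        exact add_le_add le_rfl hoff
    _ = traceNorm M := Real.sqrt_sq hT
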